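/- Let r ∈ ℕ, r ≥ 1, and let f : ℝ^N → ℂ be bounded, of class C^r, such that ∂^α f ∈ C_0(ℝ^N) for all multi-indices α with |α| = r. Then f has vanishing oscillation, and moreover ∂^β f ∈ C_0(ℝ^N) for all multi-indices β with 1 ≤ |β| ≤ r − 1. -/

import Mathlib

open Filter Metric Pointwise

variable {E F : Type*} [NormedAddCommGroup E] [NormedSpace ℝ E]
  [NormedAddCommGroup F] [NormedSpace ℝ F]

lemma fderiv_comp_add' (g : E → F) (w x : E) (hg : DifferentiableAt ℝ g (x + w)) :
    fderiv ℝ (fun y => g (y + w)) x = fderiv ℝ g (x + w) := by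
  have h1 : HasFDerivAt (fun y : E => y + w) (ContinuousLinearMap.id ℝ E) x :=
    (hasFDerivAt_id x).add_const w
  have := (hg.hasFDerivAt.comp x h1).fderiv
  simpa [Function.comp_def] using this

lemma iteratedFDeriv_comp_add {n : ℕ} {k : ℕ} (hk : k ≤ n) (f : E → F)
    (hf : ContDiff ℝ (n : ℕ∞) f) (w : E) :
    ∀ x, iteratedFDeriv ℝ k (fun y => f (y + w)) x = iteratedFDeriv ℝ k f (x + w) := by
  induction k with
  | zero => intro x; ext m; simp
  | succ k ih =>
    intro x
    have hk' : k ≤ n := le_of_lt (Nat.lt_of_succ_le hk)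
    have hdk : DifferentiableAt ℝ (iteratedFDeriv ℝ k f) (x + w) :=
      (hf.differentiable_iteratedFDeriv (by exact_mod_cast Nat.lt_of_succ_le hk)) (x + w)
    ext m
    rw [iteratedFDeriv_succ_apply_left, iteratedFDeriv_succ_apply_left]
    have heq : iteratedFDeriv ℝ k (fun y => f (y + w)) = fun y => iteratedFDeriv ℝ k f (y + w) :=
      funext (ih hk')
    rw [heq, fderiv_comp_add' (iteratedFDeriv ℝ k f) w x hdk]

lemma contDiff_comp_add {n : ℕ∞} (f : E → F) (hf : ContDiff ℝ n f) (w : E) :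
    ContDiff ℝ n (fun y => f (y + w)) :=
  hf.comp (contDiff_id.add contDiff_const)

lemma iteratedFDeriv_sub_apply' {i : ℕ} {f g : E → F} (hf : ContDiff ℝ (i : ℕ∞) f)
    (hg : ContDiff ℝ (i : ℕ∞) g) (x : E) :
    iteratedFDeriv ℝ i (fun y => f y - g y) x =
      iteratedFDeriv ℝ i f x - iteratedFDeriv ℝ i g x := by
  simp only [sub_eq_add_neg]
  rw [iteratedFDeriv_add_apply' hf.contDiffAt hg.neg.contDiffAt]
  congr 1
  exact iteratedFDeriv_neg_apply

noncomputable def mdiff : (k : ℕ) → (Fin k → E) → (E → ℂ) → E → ℂ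
  | 0, _, f, x => f x
  | (k+1), m, f, x => mdiff k (Fin.tail m) (fun y => f (y + m 0) - f y) x

set_option linter.unusedSectionVars false in
lemma mdiff_norm_le (k : ℕ) : ∀ (m : Fin k → E) (f : E → ℂ) (M : ℝ)
    (_ : ∀ y, ‖f y‖ ≤ M) (x : E), ‖mdiff k m f x‖ ≤ 2 ^ k * M := by
  induction k with
  | zero => intro m f M hM x; simpa [mdiff] using hM x
  | succ k ih =>
    intro m f M hM x
    have : ∀ y, ‖f (y + m 0) - f y‖ ≤ 2 * M := fun y =>
      (norm_sub_le _ _).trans (by linarith [hM (y + m 0), hM y])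
    calc ‖mdiff (k+1) m f x‖ = ‖mdiff k (Fin.tail m) (fun y => f (y + m 0) - f y) x‖ := rfl
      _ ≤ 2 ^ k * (2 * M) := ih (Fin.tail m) _ (2 * M) this x
      _ = 2 ^ (k+1) * M := by ring

lemma opnorm_le_of_bound_on_ball {k : ℕ} (A : ContinuousMultilinearMap ℝ (fun _ : Fin k => E) ℂ)
    {h c : ℝ} (hh : 0 < h) (hc : 0 ≤ c)
    (H : ∀ m : Fin k → E, (∀ i, ‖m i‖ ≤ h) → ‖A m‖ ≤ c) : ‖A‖ ≤ c / h ^ k := by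
  refine A.opNorm_le_bound (div_nonneg hc (pow_pos hh k).le) (fun m => ?_)
  by_cases hz : ∃ i, m i = 0
  · obtain ⟨i, hi⟩ := hz
    rw [A.map_coord_zero i hi]
    simp only [norm_zero]
    exact mul_nonneg (div_nonneg hc (pow_pos hh k).le) (Finset.prod_nonneg fun i _ => norm_nonneg _)
  · push_neg at hz
    have hmpos : ∀ i, 0 < ‖m i‖ := fun i => norm_pos_iff.2 (hz i)
    set m' : Fin k → E := fun i => (h / ‖m i‖) • m i with hm'
    have hm'norm : ∀ i, ‖m' i‖ = h := by
      intro i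
      rw [hm', norm_smul, Real.norm_of_nonneg (div_nonneg hh.le (norm_nonneg _))]
      rw [div_mul_cancel₀ _ (hmpos i).ne']
    have hA : A m' = (∏ i, (h / ‖m i‖)) • A m := A.map_smul_univ _ _
    have h1 : ‖A m'‖ ≤ c := H m' (fun i => (hm'norm i).le)
    rw [hA, norm_smul, Real.norm_of_nonneg
      (Finset.prod_nonneg fun i _ => div_nonneg hh.le (norm_nonneg _))] at h1
    have hprodpos : 0 < ∏ i : Fin k, (h / ‖m i‖) :=
      Finset.prod_pos fun i _ => div_pos hh (hmpos i)
    rw [← le_div_iff₀' hprodpos] at h1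
    calc ‖A m‖ ≤ c / ∏ i : Fin k, (h / ‖m i‖) := h1
      _ = c / h ^ k * ∏ i, ‖m i‖ := by
          rw [Finset.prod_div_distrib, Finset.prod_const, Finset.card_univ, Fintype.card_fin,
            div_div_eq_mul_div, div_mul_eq_mul_div, mul_comm]

set_option maxHeartbeats 1000000 in
lemma key : ∀ (k : ℕ) (f : E → ℂ), ContDiff ℝ ((k + 1 : ℕ) : ℕ∞) f →
    ∀ (x : E) (m : Fin k → E) (K : ℝ),
    (∀ y ∈ closedBall x (∑ i, ‖m i‖), ‖iteratedFDeriv ℝ (k + 1) f y‖ ≤ K) →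
    ‖mdiff k m f x - iteratedFDeriv ℝ k f x m‖ ≤ k * K * (∑ i, ‖m i‖) * ∏ i, ‖m i‖ := by
  intro k
  induction k with
  | zero =>
    intro f hf x m K hK
    simp [mdiff, iteratedFDeriv_zero_apply]
  | succ k ih =>
    intro f hf x m K hK
    set w := m 0 with hw
    set v : Fin k → E := Fin.tail m with hv
    have hSm : ∑ i, ‖m i‖ = ‖w‖ + ∑ i, ‖v i‖ := by
      rw [Fin.sum_univ_succ]; rfl
    have hPm : ∏ i, ‖m i‖ = ‖w‖ * ∏ i, ‖v i‖ := by
      rw [Fin.prod_univ_succ]; rfl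
    have hSv : (0:ℝ) ≤ ∑ i, ‖v i‖ := Finset.sum_nonneg fun i _ => norm_nonneg _
    have hPv : (0:ℝ) ≤ ∏ i, ‖v i‖ := Finset.prod_nonneg fun i _ => norm_nonneg _
    have hSm0 : (0:ℝ) ≤ ∑ i, ‖m i‖ := Finset.sum_nonneg fun i _ => norm_nonneg _
    have hKnn : 0 ≤ K := le_trans (norm_nonneg _) (hK x (mem_closedBall_self hSm0))
    -- smoothness facts
    have hf1 : ContDiff ℝ ((k + 1 : ℕ) : ℕ∞) f := hf.of_le (by exact_mod_cast Nat.le_succ (k+1))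
    have hfk : ContDiff ℝ ((k : ℕ) : ℕ∞) f := hf.of_le (by exact_mod_cast Nat.le_add_right k 2)
    set g : E → ℂ := fun y => f (y + w) - f y with hgdef
    have hg : ContDiff ℝ ((k + 1 : ℕ) : ℕ∞) g :=
      (contDiff_comp_add f hf1 w).sub hf1
    -- (a) iterated derivative of g
    have ha : ∀ y, iteratedFDeriv ℝ (k+1) g y
        = iteratedFDeriv ℝ (k+1) f (y + w) - iteratedFDeriv ℝ (k+1) f y := by
      intro y
      rw [hgdef]
      rw [iteratedFDeriv_sub_apply' (contDiff_comp_add f hf1 w) hf1 y,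
        iteratedFDeriv_comp_add (Nat.le_succ (k+1)) f hf w y]
    -- differentiability of the (k+1)-th derivative
    have hdiff1 : Differentiable ℝ (iteratedFDeriv ℝ (k+1) f) :=
      hf.differentiable_iteratedFDeriv (by exact_mod_cast Nat.lt_succ_self (k+1))
    have hdiffk : Differentiable ℝ (iteratedFDeriv ℝ k f) :=
      hf.differentiable_iteratedFDeriv (by exact_mod_cast (show k < k + 1 + 1 by omega))
    -- mean value bound for the (k+1)-th derivative on the big ball
    have hfderiv_norm : ∀ z, ‖fderiv ℝ (iteratedFDeriv ℝ (k+1) f) z‖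
        = ‖iteratedFDeriv ℝ (k+2) f z‖ := fun z => norm_fderiv_iteratedFDeriv
    have hmv : ∀ y z, y ∈ closedBall x (∑ i, ‖m i‖) → z ∈ closedBall x (∑ i, ‖m i‖) →
        ‖iteratedFDeriv ℝ (k+1) f z - iteratedFDeriv ℝ (k+1) f y‖ ≤ K * ‖z - y‖ := by
      intro y z hy hz
      exact (convex_closedBall x (∑ i, ‖m i‖)).norm_image_sub_le_of_norm_fderiv_le
        (fun u _ => hdiff1 u)
        (fun u hu => by rw [hfderiv_norm u]; exact hK u hu) hy hz
    -- (b) bound on D^{k+1} g on the small ball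
    have hb : ∀ y ∈ closedBall x (∑ i, ‖v i‖), ‖iteratedFDeriv ℝ (k+1) g y‖ ≤ K * ‖w‖ := by
      intro y hy
      rw [ha y]
      have hy1 : y ∈ closedBall x (∑ i, ‖m i‖) := by
        rw [mem_closedBall] at hy ⊢
        calc dist y x ≤ ∑ i, ‖v i‖ := hy
          _ ≤ ∑ i, ‖m i‖ := by rw [hSm]; linarith [norm_nonneg w]
      have hy2 : y + w ∈ closedBall x (∑ i, ‖m i‖) := by
        rw [mem_closedBall] at hy ⊢
        calc dist (y + w) x ≤ dist (y + w) y + dist y x := dist_triangle _ _ _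
          _ ≤ ‖w‖ + ∑ i, ‖v i‖ := by
              rw [dist_eq_norm, add_sub_cancel_left]
              exact add_le_add le_rfl hy
          _ = ∑ i, ‖m i‖ := hSm.symm
      calc ‖iteratedFDeriv ℝ (k+1) f (y + w) - iteratedFDeriv ℝ (k+1) f y‖
          ≤ K * ‖y + w - y‖ := hmv y (y + w) hy1 hy2
        _ = K * ‖w‖ := by rw [add_sub_cancel_left]
    -- (c) induction hypothesis applied to g
    have hc : ‖mdiff k v g x - iteratedFDeriv ℝ k g x v‖
        ≤ k * (K * ‖w‖) * (∑ i, ‖v i‖) * ∏ i, ‖v i‖ := ih g hg x v (K * ‖w‖) hb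
    -- (d) Taylor-type estimate on the k-th derivative
    have hsub : closedBall x ‖w‖ ⊆ closedBall x (∑ i, ‖m i‖) :=
      closedBall_subset_closedBall (by rw [hSm]; linarith)
    have hd : ‖iteratedFDeriv ℝ k f (x + w) - iteratedFDeriv ℝ k f x
        - fderiv ℝ (iteratedFDeriv ℝ k f) x w‖ ≤ K * ‖w‖ * ‖w‖ := by
      have hb2 : ∀ z ∈ closedBall x ‖w‖,
          ‖fderiv ℝ (iteratedFDeriv ℝ k f) z - fderiv ℝ (iteratedFDeriv ℝ k f) x‖
            ≤ K * ‖w‖ := by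
        intro z hz
        have : fderiv ℝ (iteratedFDeriv ℝ k f) = fun u =>
            (continuousMultilinearCurryLeftEquiv ℝ (fun _ : Fin (k+1) => E) ℂ)
              (iteratedFDeriv ℝ (k+1) f u) := fderiv_iteratedFDeriv
        rw [this]
        rw [← LinearIsometryEquiv.map_sub, LinearIsometryEquiv.norm_map]
        calc ‖iteratedFDeriv ℝ (k+1) f z - iteratedFDeriv ℝ (k+1) f x‖
            ≤ K * ‖z - x‖ := hmv x z (mem_closedBall_self hSm0) (hsub hz)
          _ ≤ K * ‖w‖ := by
              apply mul_le_mul_of_nonneg_left _ hKnn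
              rw [← dist_eq_norm]; exact hz
      have hxw : x + w ∈ closedBall x ‖w‖ := by
        rw [mem_closedBall, dist_eq_norm, add_sub_cancel_left]
      have := (convex_closedBall x ‖w‖).norm_image_sub_le_of_norm_fderiv_le'
        (fun u _ => hdiffk u) hb2 (mem_closedBall_self (norm_nonneg w)) hxw
      rw [add_sub_cancel_left] at this
      exact this
    -- (e) combine
    have e1 : mdiff (k+1) m f x = mdiff k v g x := rfl
    have e2 : (iteratedFDeriv ℝ (k+1) f x) m = (fderiv ℝ (iteratedFDeriv ℝ k f) x) w v :=
      iteratedFDeriv_succ_apply_left m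
    have e3 : iteratedFDeriv ℝ k g x v
        = iteratedFDeriv ℝ k f (x + w) v - iteratedFDeriv ℝ k f x v := by
      rw [hgdef, iteratedFDeriv_sub_apply' (contDiff_comp_add f hfk w) hfk x,
        iteratedFDeriv_comp_add (by omega : k ≤ k + 2) f hf w x]
      rfl
    have e4 : ‖iteratedFDeriv ℝ k f (x + w) v - iteratedFDeriv ℝ k f x v
        - (fderiv ℝ (iteratedFDeriv ℝ k f) x) w v‖ ≤ (K * ‖w‖ * ‖w‖) * ∏ i, ‖v i‖ := by
      have : iteratedFDeriv ℝ k f (x + w) v - iteratedFDeriv ℝ k f x v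
          - (fderiv ℝ (iteratedFDeriv ℝ k f) x) w v
          = (iteratedFDeriv ℝ k f (x + w) - iteratedFDeriv ℝ k f x
            - fderiv ℝ (iteratedFDeriv ℝ k f) x w) v := by
        simp [ContinuousMultilinearMap.sub_apply]
      rw [this]
      calc ‖(iteratedFDeriv ℝ k f (x + w) - iteratedFDeriv ℝ k f x
            - fderiv ℝ (iteratedFDeriv ℝ k f) x w) v‖
          ≤ ‖iteratedFDeriv ℝ k f (x + w) - iteratedFDeriv ℝ k f x
            - fderiv ℝ (iteratedFDeriv ℝ k f) x w‖ * ∏ i, ‖v i‖ :=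
            ContinuousMultilinearMap.le_opNorm _ _
        _ ≤ (K * ‖w‖ * ‖w‖) * ∏ i, ‖v i‖ := mul_le_mul_of_nonneg_right hd hPv
    calc ‖mdiff (k+1) m f x - iteratedFDeriv ℝ (k+1) f x m‖
        = ‖(mdiff k v g x - iteratedFDeriv ℝ k g x v)
          + (iteratedFDeriv ℝ k f (x + w) v - iteratedFDeriv ℝ k f x v
            - (fderiv ℝ (iteratedFDeriv ℝ k f) x) w v)‖ := by
          rw [e1, e2, e3]; ring_nf
      _ ≤ ‖mdiff k v g x - iteratedFDeriv ℝ k g x v‖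
          + ‖iteratedFDeriv ℝ k f (x + w) v - iteratedFDeriv ℝ k f x v
            - (fderiv ℝ (iteratedFDeriv ℝ k f) x) w v‖ := norm_add_le _ _
      _ ≤ k * (K * ‖w‖) * (∑ i, ‖v i‖) * ∏ i, ‖v i‖ + (K * ‖w‖ * ‖w‖) * ∏ i, ‖v i‖ :=
          add_le_add hc e4
      _ ≤ (k+1) * K * (∑ i, ‖m i‖) * ∏ i, ‖m i‖ := by
          rw [hSm, hPm]
          have hwnn := norm_nonneg w
          nlinarith [mul_nonneg (mul_nonneg hKnn hwnn) (mul_nonneg hSv hPv),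
            mul_nonneg (mul_nonneg hKnn (mul_nonneg hwnn hwnn)) hPv,
            mul_nonneg (mul_nonneg (mul_nonneg (Nat.cast_nonneg k : (0:ℝ) ≤ k) hKnn) (mul_nonneg hwnn hwnn)) hPv,
            mul_nonneg (mul_nonneg (mul_nonneg (Nat.cast_nonneg k : (0:ℝ) ≤ k) hKnn) (mul_nonneg hwnn hSv)) hPv]
      _ = (((k+1 : ℕ) : ℝ)) * K * (∑ i, ‖m i‖) * ∏ i, ‖m i‖ := by push_cast; ring
    

lemma step_lemma {E : Type*} [NormedAddCommGroup E] [NormedSpace ℝ E] [ProperSpace E]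
    (k : ℕ) (hk : 1 ≤ k) (f : E → ℂ) (M : ℝ)
    (hM : ∀ y, ‖f y‖ ≤ M)
    (hf : ContDiff ℝ ((k + 1 : ℕ) : ℕ∞) f)
    (h1 : Tendsto (fun y => ‖iteratedFDeriv ℝ (k + 1) f y‖) (cocompact E) (nhds 0)) :
    Tendsto (fun y => ‖iteratedFDeriv ℝ k f y‖) (cocompact E) (nhds 0) := by
  rw [NormedAddCommGroup.tendsto_nhds_zero] at h1 ⊢
  simp only [norm_norm] at h1 ⊢
  intro ε hε
  set M0 := max M 0 with hM0def
  have hM0 : (0:ℝ) ≤ M0 := le_max_right _ _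
  have hM' : ∀ y, ‖f y‖ ≤ M0 := fun y => (hM y).trans (le_max_left _ _)
  set h : ℝ := max 1 (2 ^ (k+1) * M0 / ε) with hhdef
  have hh1 : (1:ℝ) ≤ h := le_max_left _ _
  have hhpos : (0:ℝ) < h := lt_of_lt_of_le one_pos hh1
  have hhk : h ≤ h ^ k := le_self_pow₀ hh1 (by omega)
  have hckey : 2 ^ k * M0 / h ^ k ≤ ε / 2 := by
    have h2 : 2 ^ (k+1) * M0 / ε ≤ h := le_max_right _ _
    rw [div_le_iff₀ hε] at h2
    rw [div_le_iff₀ (pow_pos hhpos k)]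
    have : h * ε ≤ h ^ k * ε := mul_le_mul_of_nonneg_right hhk hε.le
    calc 2 ^ k * M0 = (2 ^ (k+1) * M0) / 2 := by ring
      _ ≤ (h * ε) / 2 := by linarith
      _ ≤ (h ^ k * ε) / 2 := by linarith
      _ = ε / 2 * h ^ k := by ring
  set δ : ℝ := ε / (4 * ((k:ℝ) ^ 2 + 1) * h) with hδdef
  have hδpos : 0 < δ := by positivity
  obtain ⟨s, hs, hsδ⟩ := (hasBasis_cocompact.eventually_iff).1 (h1 δ hδpos)
  set T := s + closedBall (0:E) ((k:ℝ) * h) with hTdef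
  have hT : IsCompact T := hs.add (isCompact_closedBall 0 _)
  rw [hasBasis_cocompact.eventually_iff]
  refine ⟨T, hT, fun x hx => ?_⟩
  have hball : ∀ y ∈ closedBall x ((k:ℝ) * h), ‖iteratedFDeriv ℝ (k+1) f y‖ ≤ δ := by
    intro y hy
    have hys : y ∉ s := by
      intro hys
      apply hx
      refine ⟨y, hys, x - y, ?_, by show y + (x - y) = x; rw [add_comm, sub_add_cancel]⟩
      rw [mem_closedBall, dist_eq_norm, sub_zero, ← dist_eq_norm, dist_comm]
      exact hy
    exact (hsδ hys).le
  -- bound on the multilinear map evaluated on small vectors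
  set c : ℝ := 2 ^ k * M0 + (k:ℝ) * δ * ((k:ℝ) * h) * h ^ k with hcdef
  have hcnn : 0 ≤ c := by positivity
  have hbound : ∀ m : Fin k → E, (∀ i, ‖m i‖ ≤ h) → ‖iteratedFDeriv ℝ k f x m‖ ≤ c := by
    intro m hm
    have hSle : ∑ i, ‖m i‖ ≤ (k:ℝ) * h := by
      calc ∑ i, ‖m i‖ ≤ ∑ _i : Fin k, h := Finset.sum_le_sum fun i _ => hm i
        _ = (k:ℝ) * h := by simp [Finset.sum_const, Finset.card_univ, mul_comm]
    have hPle : ∏ i, ‖m i‖ ≤ h ^ k := by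
      calc ∏ i, ‖m i‖ ≤ ∏ _i : Fin k, h :=
          Finset.prod_le_prod (fun i _ => norm_nonneg _) (fun i _ => hm i)
        _ = h ^ k := by simp [Finset.prod_const, Finset.card_univ]
    have hK' : ∀ y ∈ closedBall x (∑ i, ‖m i‖), ‖iteratedFDeriv ℝ (k+1) f y‖ ≤ δ :=
      fun y hy => hball y (closedBall_subset_closedBall hSle hy)
    have t2 := key k f hf x m δ hK'
    have t1 := mdiff_norm_le k m f M0 hM' x
    have hSnn : (0:ℝ) ≤ ∑ i, ‖m i‖ := Finset.sum_nonneg fun i _ => norm_nonneg _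
    have hPnn : (0:ℝ) ≤ ∏ i, ‖m i‖ := Finset.prod_nonneg fun i _ => norm_nonneg _
    calc ‖iteratedFDeriv ℝ k f x m‖
        = ‖mdiff k m f x - (mdiff k m f x - iteratedFDeriv ℝ k f x m)‖ := by
          rw [sub_sub_cancel]
      _ ≤ ‖mdiff k m f x‖ + ‖mdiff k m f x - iteratedFDeriv ℝ k f x m‖ := norm_sub_le _ _
      _ ≤ 2 ^ k * M0 + (k:ℝ) * δ * (∑ i, ‖m i‖) * ∏ i, ‖m i‖ := add_le_add t1 t2
      _ ≤ c := by
          rw [hcdef]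
          gcongr
  have hop := opnorm_le_of_bound_on_ball (iteratedFDeriv ℝ k f x) hhpos hcnn hbound
  have hc2 : c / h ^ k = 2 ^ k * M0 / h ^ k + (k:ℝ) * δ * ((k:ℝ) * h) := by
    rw [hcdef, add_div, mul_div_cancel_right₀ _ (pow_pos hhpos k).ne']
  have hδh : δ * h = ε / (4 * ((k:ℝ) ^ 2 + 1)) := by
    rw [hδdef, ← div_div, div_mul_cancel₀ _ hhpos.ne']
  have hlast : (k:ℝ) * δ * ((k:ℝ) * h) ≤ ε / 4 := by
    have : (k:ℝ) * δ * ((k:ℝ) * h) = (k:ℝ) ^ 2 * (δ * h) := by ring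
    rw [this, hδh, ← mul_div_assoc,
      div_le_div_iff₀ (by positivity) (by norm_num : (0:ℝ) < 4)]
    nlinarith [hε.le, sq_nonneg (k:ℝ)]
  calc ‖iteratedFDeriv ℝ k f x‖ ≤ c / h ^ k := hop
    _ = 2 ^ k * M0 / h ^ k + (k:ℝ) * δ * ((k:ℝ) * h) := hc2
    _ ≤ ε / 2 + ε / 4 := add_le_add hckey hlast
    _ < ε := by linarith

/-- If `f : ℝ^N → ℂ` is bounded, of class `C^r` (`r ≥ 1`), and all derivatives of
order exactly `r` vanish at infinity, then `f` has vanishing oscillation and all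
derivatives of order `1 ≤ i ≤ r - 1` vanish at infinity. -/
theorem stmt1 {N : ℕ} (r : ℕ) (hr : 1 ≤ r) (f : EuclideanSpace ℝ (Fin N) → ℂ)
    (hbdd : ∃ C : ℝ, ∀ y, ‖f y‖ ≤ C)
    (hdiff : ContDiff ℝ (r : ℕ∞) f)
    (htop : Tendsto (fun y => ‖iteratedFDeriv ℝ r f y‖)
      (cocompact (EuclideanSpace ℝ (Fin N))) (nhds 0)) :
    (∀ x : EuclideanSpace ℝ (Fin N),
      Tendsto (fun y => f (y + x) - f y)
        (cocompact (EuclideanSpace ℝ (Fin N))) (nhds 0)) ∧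
    (∀ i : ℕ, 1 ≤ i → i ≤ r - 1 →
      Tendsto (fun y => ‖iteratedFDeriv ℝ i f y‖)
        (cocompact (EuclideanSpace ℝ (Fin N))) (nhds 0)) := by
  obtain ⟨M, hM⟩ := hbdd
  have chain : ∀ d j, j + d = r → 1 ≤ j →
      Tendsto (fun y => ‖iteratedFDeriv ℝ j f y‖)
        (cocompact (EuclideanSpace ℝ (Fin N))) (nhds 0) := by
    intro d
    induction d with
    | zero =>
      intro j hj _
      have : j = r := by omega
      subst this; exact htop
    | succ d ih =>
      intro j hj hj1
      have hnext := ih (j+1) (by omega) (by omega)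
      exact step_lemma j hj1 f M hM
        (hdiff.of_le (by exact_mod_cast (show (j+1 : ℕ) ≤ r by omega))) hnext
  constructor
  · intro x
    have hD1 := chain (r - 1) 1 (by omega) le_rfl
    rw [NormedAddCommGroup.tendsto_nhds_zero] at hD1 ⊢
    simp only [norm_norm] at hD1
    intro ε hε
    have hδpos : 0 < ε / (‖x‖ + 1) := by positivity
    obtain ⟨s, hs, hsδ⟩ := (hasBasis_cocompact.eventually_iff).1 (hD1 _ hδpos)
    have hT : IsCompact (s + closedBall (0 : EuclideanSpace ℝ (Fin N)) ‖x‖) :=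
      hs.add (isCompact_closedBall 0 _)
    rw [hasBasis_cocompact.eventually_iff]
    refine ⟨_, hT, fun y hy => ?_⟩
    have hball : ∀ z ∈ closedBall y ‖x‖, ‖iteratedFDeriv ℝ 1 f z‖ ≤ ε / (‖x‖ + 1) := by
      intro z hz
      have hzs : z ∉ s := fun hzs => hy ⟨z, hzs, y - z,
        by rw [mem_closedBall, dist_eq_norm, sub_zero, ← dist_eq_norm, dist_comm]; exact hz,
        by show z + (y - z) = y; rw [add_comm, sub_add_cancel]⟩
      exact (hsδ hzs).le
    have hdiff1 : Differentiable ℝ f := hdiff.differentiable (by exact_mod_cast (show r ≠ 0 by omega))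
    have hfd : ∀ z ∈ closedBall y ‖x‖, ‖fderiv ℝ f z‖ ≤ ε / (‖x‖ + 1) := by
      intro z hz
      refine le_trans (ContinuousLinearMap.opNorm_le_bound _ (norm_nonneg _) fun u => ?_)
        (hball z hz)
      have he : fderiv ℝ f z u = iteratedFDeriv ℝ 1 f z (fun _ => u) := by
        rw [iteratedFDeriv_one_apply]
      rw [he]
      calc ‖iteratedFDeriv ℝ 1 f z (fun _ : Fin 1 => u)‖
          ≤ ‖iteratedFDeriv ℝ 1 f z‖ * ∏ _i : Fin 1, ‖u‖ :=
            ContinuousMultilinearMap.le_opNorm _ _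
        _ = ‖iteratedFDeriv ℝ 1 f z‖ * ‖u‖ := by simp
    have hmem1 : y ∈ closedBall y ‖x‖ := mem_closedBall_self (norm_nonneg x)
    have hmem2 : y + x ∈ closedBall y ‖x‖ := by
      rw [mem_closedBall, dist_eq_norm, add_sub_cancel_left]
    have hmv := (convex_closedBall y ‖x‖).norm_image_sub_le_of_norm_fderiv_le
      (fun z _ => hdiff1 z) hfd hmem1 hmem2
    rw [add_sub_cancel_left] at hmv
    calc ‖f (y + x) - f y‖ ≤ ε / (‖x‖ + 1) * ‖x‖ := hmv
      _ < ε / (‖x‖ + 1) * (‖x‖ + 1) := mul_lt_mul_of_pos_left (lt_add_one _) hδpos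
      _ = ε := div_mul_cancel₀ _ (by positivity)
  · intro i hi1 hir
    exact chain (r - i) i (by omega) hi1
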